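/- arXiv:1710.01782 — 2 statements merged into one kernel-verified Lean document; each statement's English description precedes it below -/
import Mathlib

section
/- If ⟨v,u⟩ is a critical pair of a network (G,α) (with associated vertices v₁, v₂, u' as in the definition), then for every shortest path tree T of G rooted at u, either the edge (v,v₁) is not an edge of T or v₁ is the parent of v in T. Furthermore, if ⟨v,u⟩ is a strong critical pair, then there exists a shortest path tree of G rooted at u that does not contain the edge (v,v₂). -/
open scoped BigOperators

namespace NCG

variable {V : Type*} [Fintype V] [DecidableEq V]

/-- The network induced by a strategy vector `st`: `{u,v}` is an edge iff (at least)
one of the endpoints buys it, i.e. `v ∈ st u` or `u ∈ st v`. -/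
def graph (st : V → Finset V) : SimpleGraph V where
  Adj u v := u ≠ v ∧ (v ∈ st u ∨ u ∈ st v)
  symm := ⟨fun u v h => ⟨h.1.symm, h.2.symm⟩⟩
  loopless := ⟨fun u h => h.1 rfl⟩

open scoped Classical in
/-- The distance cost of agent `u`: the sum of the graph distances to all nodes if the
network is connected, and `⊤` otherwise. -/
noncomputable def distcost (st : V → Finset V) (u : V) : EReal :=
  if (graph st).Connected then (((∑ w : V, ((graph st).dist u w : ℝ)) : ℝ) : EReal) else ⊤

/-- The cost of agent `u`: `α` per bought edge plus the distance cost. -/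
noncomputable def cost (α : ℝ) (st : V → Finset V) (u : V) : EReal :=
  ((α * (st u).card : ℝ) : EReal) + distcost st u

/-- A network is stable (a pure Nash equilibrium) if no agent `u` can strictly
decrease her cost by unilaterally changing her own strategy set `st u`. -/
def Stable (α : ℝ) (st : V → Finset V) : Prop :=
  ∀ u : V, ∀ t : Finset V, u ∉ t → cost α st u ≤ cost α (Function.update st u t) u

/-- The social cost of a network: the sum of the costs of all agents. -/
noncomputable def socialCost (α : ℝ) (st : V → Finset V) : EReal :=
  ∑ u : V, cost α st u

/-- The optimal (minimum) social cost over all strategy vectors on agent set `W`. -/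
noncomputable def optCost (α : ℝ) (W : Type*) [Fintype W] [DecidableEq W] : EReal :=
  sInf {c : EReal | ∃ st : W → Finset W, (∀ u, u ∉ st u) ∧ c = socialCost α st}

/-- `T` is a shortest path tree of `G` rooted at `r`: a spanning tree of `G`
preserving all distances from `r`. -/
def IsSPT (G : SimpleGraph V) (r : V) (T : SimpleGraph V) : Prop :=
  T ≤ G ∧ T.IsTree ∧ ∀ x, T.dist r x = G.dist r x

/-- The subgraph of `G` induced on `S` is biconnected: it has at least 3 vertices,
it is connected, and it has no cut vertex. -/
def IsBiconnectedOn (G : SimpleGraph V) (S : Set V) : Prop :=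
  3 ≤ S.ncard ∧ (G.induce S).Connected ∧ ∀ x ∈ S, (G.induce (S \ {x})).Connected

/-- `S` induces a biconnected component of `G`: a maximal biconnected induced subgraph. -/
def IsBiconnectedComponent (G : SimpleGraph V) (S : Set V) : Prop :=
  IsBiconnectedOn G S ∧ ∀ S' : Set V, S ⊆ S' → IsBiconnectedOn G S' → S' = S

/-- `⟨v,u⟩` is a critical pair (with witnesses `v₁, v₂, u'` and biconnected component `H`)
of the network induced by the strategy vector `st`:
(1) `v ∈ H` buys the two distinct non-bridge edges `(v,v₁)` and `(v,v₂)` with `v₁,v₂ ∈ H`;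
(2) `u ∈ H`, `u ≠ v`, buys an edge `(u,u')` with `u' ∈ H`, `u' ≠ v`;
(3) `d(v,u) ≥ 2`;
(4) some shortest path from `v` to `u` uses the edge `(v,v₁)`;
(5) some shortest path from `v` to `u'` does not use the edge `(u,u')`. -/
def IsCriticalPair (st : V → Finset V) (H : Set V) (v u v₁ v₂ u' : V) : Prop :=
  IsBiconnectedComponent (graph st) H ∧
  v ∈ H ∧ v₁ ∈ H ∧ v₂ ∈ H ∧ v₁ ≠ v₂ ∧
  v₁ ∈ st v ∧ v₂ ∈ st v ∧
  ¬ (graph st).IsBridge (s(v, v₁)) ∧ ¬ (graph st).IsBridge (s(v, v₂)) ∧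
  u ∈ H ∧ u ≠ v ∧ u' ∈ H ∧ u' ≠ v ∧ u' ∈ st u ∧
  2 ≤ (graph st).dist v u ∧
  (∃ p : (graph st).Walk v u, p.IsPath ∧ p.length = (graph st).dist v u ∧
    s(v, v₁) ∈ p.edges) ∧
  (∃ p : (graph st).Walk v u', p.IsPath ∧ p.length = (graph st).dist v u' ∧
    s(u, u') ∉ p.edges)

/-- A critical pair is strong if moreover some shortest path from `u` to `v₂`
does not use the edge `(v,v₂)`. -/
def IsStrongCriticalPair (st : V → Finset V) (H : Set V) (v u v₁ v₂ u' : V) : Prop :=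
  IsCriticalPair st H v u v₁ v₂ u' ∧
  ∃ p : (graph st).Walk u v₂, p.IsPath ∧ p.length = (graph st).dist u v₂ ∧
    s(v, v₂) ∉ p.edges

/-- A cycle `c` in `G` is a min cycle if for every two vertices on the cycle, their
distance along the cycle equals their distance in `G`. -/
def IsMinCycle (G : SimpleGraph V) {a : V} (c : G.Walk a a) : Prop :=
  c.IsCycle ∧ ∀ (x : V) (hx : x ∈ c.toSubgraph.verts) (y : V) (hy : y ∈ c.toSubgraph.verts),
    c.toSubgraph.coe.dist ⟨x, hx⟩ ⟨y, hy⟩ = G.dist x y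

/-- A cycle `c` of the network induced by `st` is directed if, traversed in one of the
two possible directions, every edge of the cycle is bought by its tail vertex. -/
def IsDirectedCycle (st : V → Finset V) {a : V} (c : (graph st).Walk a a) : Prop :=
  c.IsCycle ∧
    ((∀ i < c.length, c.getVert (i + 1) ∈ st (c.getVert i)) ∨
     (∀ i < c.length, c.getVert i ∈ st (c.getVert (i + 1))))

/-- `c` is a centroid of (the subgraph of `G` induced on) `S`: every connected component
obtained from `S` by removing `c` contains at most `|S|/2` vertices. -/
def IsCentroidOn (G : SimpleGraph V) (S : Set V) (c : V) : Prop :=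
  c ∈ S ∧ ∀ x ∈ S, x ≠ c →
    2 * {y | y ∈ S ∧ ∃ p : G.Walk x y, c ∉ p.support ∧ ∀ z ∈ p.support, z ∈ S}.ncard
      ≤ S.ncard

end NCG

section Aux

open SimpleGraph

variable {V : Type*}

/-- If a shortest path from `a` to `b` uses an edge `s(a,w)`, then
`dist b w + 1 = dist b a`. -/
private lemma NCGaux.first_edge_dist {G : SimpleGraph V} (hG : G.Connected)
    {a b w : V} (p : G.Walk a b) (hp : p.IsPath) (hlen : p.length = G.dist a b)
    (he : s(a, w) ∈ p.edges) : G.dist b w + 1 = G.dist b a := by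
  cases p with
  | nil => simp at he
  | @cons _ c _ h q =>
    rw [SimpleGraph.Walk.edges_cons, List.mem_cons] at he
    rcases he with he | he
    · have hwc : w = c := by
        rcases Sym2.eq_iff.mp he with ⟨-, h2⟩ | ⟨h1, -⟩
        · exact h2
        · exact absurd h1 h.ne
      subst hwc
      have h1 : G.dist w b ≤ q.length := SimpleGraph.dist_le q
      have h2 : G.dist a b ≤ G.dist a w + G.dist w b := hG.dist_triangle
      have h3 : G.dist a w ≤ 1 := by
        simpa using SimpleGraph.dist_le (SimpleGraph.Walk.cons h SimpleGraph.Walk.nil)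
      have h4 : (SimpleGraph.Walk.cons h q).length = q.length + 1 := by simp
      have h5 : G.dist b w = G.dist w b := SimpleGraph.dist_comm
      have h6 : G.dist b a = G.dist a b := SimpleGraph.dist_comm
      omega
    · rw [SimpleGraph.Walk.cons_isPath_iff] at hp
      exact absurd (q.fst_mem_support_of_mem_edges he) hp.2

private lemma NCGaux.exists_parent {G : SimpleGraph V} (hG : G.Connected) {u x : V}
    (hx : x ≠ u) : ∃ y, G.Adj x y ∧ G.dist u y + 1 = G.dist u x := by
  obtain ⟨p, hp, hlen⟩ := hG.exists_path_of_dist x u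
  cases p with
  | nil => exact absurd rfl hx
  | @cons _ c _ h q =>
    exact ⟨c, h, NCGaux.first_edge_dist hG (SimpleGraph.Walk.cons h q) hp hlen
      (by simp)⟩

private lemma NCGaux.exists_parent_avoid {G : SimpleGraph V} (hG : G.Connected) {u x z : V}
    (hx : x ≠ u) (p : G.Walk x u) (hp : p.IsPath) (hlen : p.length = G.dist x u)
    (hz : s(x, z) ∉ p.edges) :
    ∃ y, G.Adj x y ∧ G.dist u y + 1 = G.dist u x ∧ y ≠ z := by
  cases p with
  | nil => exact absurd rfl hx
  | @cons _ c _ h q =>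
    refine ⟨c, h, NCGaux.first_edge_dist hG (SimpleGraph.Walk.cons h q) hp hlen
      (by simp), ?_⟩
    rintro rfl
    exact hz (by simp)

/-- A cycle cannot exist in a "parent" graph. -/
private lemma NCGaux.cycle_absurd {T : SimpleGraph V} (ℓ : V → ℕ) (par : V → V)
    (hkey : ∀ a b, T.Adj a b → ℓ b ≤ ℓ a → par a = b)
    {x : V} (c : T.Walk x x) (hc : c.IsCycle)
    (hmax : ∀ y ∈ c.support, ℓ y ≤ ℓ x) : False := by
  cases c with
  | nil => simpa using hc.three_le_length
  | @cons _ b _ hb q =>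
    have hb' : par x = b := hkey x b hb (hmax b (by simp))
    have hqlen : 2 ≤ q.length := by
      have := hc.three_le_length
      simp only [SimpleGraph.Walk.length_cons] at this
      omega
    cases hr : (SimpleGraph.Walk.cons hb q).reverse with
    | nil =>
      have := congrArg SimpleGraph.Walk.length hr
      rw [SimpleGraph.Walk.length_reverse] at this
      simp at this
    | @cons _ d _ hd r =>
      have hdmem : d ∈ (SimpleGraph.Walk.cons hb q).support := by
        have h1 : d ∈ (SimpleGraph.Walk.cons hb q).reverse.support := by
          rw [hr]; simp
        rwa [SimpleGraph.Walk.support_reverse, List.mem_reverse] at h1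
      have hd' : par x = d := hkey x d hd (hmax d hdmem)
      have hbd : b = d := hb'.symm.trans hd'
      subst hbd
      have hE : (SimpleGraph.Walk.cons hb q).edges.reverse = s(x, b) :: r.edges := by
        rw [← SimpleGraph.Walk.edges_reverse, hr, SimpleGraph.Walk.edges_cons]
      rw [SimpleGraph.Walk.edges_cons, List.reverse_cons] at hE
      have hqne : q.edges.reverse ≠ [] := by
        intro hnil
        have := congrArg List.length hnil
        rw [List.length_reverse, SimpleGraph.Walk.length_edges] at this
        simp only [List.length_nil] at this
        omega
      obtain ⟨e, es, hq⟩ := List.exists_cons_of_ne_nil hqne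
      rw [hq, List.cons_append] at hE
      have heq : e = s(x, b) := (List.cons_eq_cons.mp hE).1
      have hmem : s(x, b) ∈ q.edges := by
        rw [← List.mem_reverse, hq, heq]
        exact List.mem_cons_self
      have hnodup := hc.edges_nodup
      rw [SimpleGraph.Walk.edges_cons, List.nodup_cons] at hnodup
      exact hnodup.1 hmem

/-- The parent construction gives a shortest path tree. -/
private lemma NCGaux.spt_parent [Fintype V] [DecidableEq V]
    {G : SimpleGraph V} (hG : G.Connected) (u : V) (par : V → V)
    (hadj : ∀ x, x ≠ u → G.Adj x (par x))
    (hdist : ∀ x, x ≠ u → G.dist u (par x) + 1 = G.dist u x) :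
    NCG.IsSPT G u (SimpleGraph.fromRel (fun a b => a ≠ u ∧ par a = b)) := by
  set T := SimpleGraph.fromRel (fun a b => a ≠ u ∧ par a = b) with hTdef
  have hTadj : ∀ a b, T.Adj a b ↔ a ≠ b ∧ ((a ≠ u ∧ par a = b) ∨ (b ≠ u ∧ par b = a)) :=
    fun a b => SimpleGraph.fromRel_adj _ a b
  have hTle : T ≤ G := by
    intro a b hab
    rcases (hTadj a b).mp hab with ⟨hne, ⟨hau, hpb⟩ | ⟨hbu, hpa⟩⟩
    · exact hpb ▸ hadj a hau
    · exact (hpa ▸ hadj b hbu).symm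
  have hwalk : ∀ x, ∃ w : T.Walk u x, w.length = G.dist u x := by
    suffices h : ∀ n x, G.dist u x = n → ∃ w : T.Walk u x, w.length = G.dist u x from
      fun x => h _ x rfl
    intro n
    induction n using Nat.strong_induction_on with
    | _ n ih =>
      intro x hn
      by_cases hxu : x = u
      · subst hxu
        exact ⟨SimpleGraph.Walk.nil, by simp [SimpleGraph.dist_self]⟩
      · have h1 := hdist x hxu
        have h2 := hadj x hxu
        obtain ⟨w, hw⟩ := ih (G.dist u (par x)) (by omega) (par x) rfl
        have hT : T.Adj (par x) x :=
          (hTadj (par x) x).mpr ⟨fun hh => h2.ne hh.symm, Or.inr ⟨hxu, rfl⟩⟩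
        exact ⟨w.concat hT, by rw [SimpleGraph.Walk.length_concat, hw]; omega⟩
  have hreach : ∀ x, T.Reachable u x := fun x => ⟨(hwalk x).choose⟩
  have hTconn : T.Connected := by
    have : Nonempty V := hG.nonempty
    exact ⟨fun a b => (hreach a).symm.trans (hreach b)⟩
  have hdistT : ∀ x, T.dist u x = G.dist u x := by
    intro x
    apply le_antisymm
    · obtain ⟨w, hw⟩ := hwalk x
      exact hw ▸ SimpleGraph.dist_le w
    · obtain ⟨w, hw⟩ := (hreach x).exists_walk_length_eq_dist
      simpa [hw] using SimpleGraph.dist_le (w.mapLe hTle)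
  have hkey : ∀ a b, T.Adj a b → G.dist u b ≤ G.dist u a → par a = b := by
    intro a b hab hle
    rcases (hTadj a b).mp hab with ⟨hne, h | h⟩
    · exact h.2
    · exfalso
      have := hdist b h.1
      rw [h.2] at this
      omega
  have hacyc : T.IsAcyclic := by
    intro a c hc
    obtain ⟨x, hxmem, hxmax⟩ := Finset.exists_max_image c.support.toFinset
      (fun y => G.dist u y) ⟨a, by simp⟩
    rw [List.mem_toFinset] at hxmem
    refine NCGaux.cycle_absurd (fun y => G.dist u y) par hkey (c.rotate x hxmem)
      (hc.rotate hxmem) ?_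
    intro y hy
    rcases (SimpleGraph.Walk.mem_support_iff _).mp hy with rfl | hy'
    · exact le_rfl
    · have hy2 : y ∈ c.support.tail := ((SimpleGraph.Walk.support_rotate c x hxmem).mem_iff).mp hy'
      exact hxmax y (List.mem_toFinset.mpr (List.mem_of_mem_tail hy2))
  exact ⟨hTle, ⟨hTconn, hacyc⟩, hdistT⟩

end Aux

/-- If `⟨v,u⟩` is a critical pair of a (connected) network, then in every
shortest path tree `T` rooted at `u` either the edge `(v,v₁)` does not occur or `v₁` is the
parent of `v`; and if the pair is strong, some shortest path tree rooted at `u` avoids the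
edge `(v,v₂)`. -/
theorem critical_pair_spt_rooted_at_u {V : Type*} [Fintype V] [DecidableEq V]
    (α : ℝ) (st : V → Finset V) (hself : ∀ u, u ∉ st u)
    (hconn : (NCG.graph st).Connected)
    (H : Set V) (v u v₁ v₂ u' : V)
    (hcp : NCG.IsCriticalPair st H v u v₁ v₂ u') :
    (∀ T : SimpleGraph V, NCG.IsSPT (NCG.graph st) u T →
      (¬ T.Adj v v₁ ∨ (T.Adj v v₁ ∧ T.dist u v₁ + 1 = T.dist u v))) ∧
    (NCG.IsStrongCriticalPair st H v u v₁ v₂ u' →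
      ∃ T : SimpleGraph V, NCG.IsSPT (NCG.graph st) u T ∧ ¬ T.Adj v v₂) := by
  obtain ⟨hbc, hvH, hv₁H, hv₂H, hv₁v₂, hv₁st, hv₂st, hnb₁, hnb₂, huH, huv, hu'H, hu'v, hu'st,
    hdist2, ⟨pvu, hpvu, hlvu, hevu⟩, ⟨pvu', hpvu', hlvu', hevu'⟩⟩ := hcp
  have factA : (NCG.graph st).dist u v₁ + 1 = (NCG.graph st).dist u v :=
    NCGaux.first_edge_dist hconn pvu hpvu hlvu hevu
  constructor
  · intro T hT
    by_cases hA : T.Adj v v₁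
    · exact Or.inr ⟨hA, by rw [hT.2.2 v₁, hT.2.2 v]; exact factA⟩
    · exact Or.inl hA
  · rintro ⟨-, puv₂, hp, hl, he⟩
    have hv₂v : v₂ ≠ v := fun h => hself v (h ▸ hv₂st)
    have hAdjvv₂ : (NCG.graph st).Adj v v₂ := show v ≠ v₂ ∧ (v₂ ∈ st v ∨ v ∈ st v₂) from ⟨hv₂v.symm, Or.inl hv₂st⟩
    have hv₂u : v₂ ≠ u := by
      rintro rfl
      have h1 : (NCG.graph st).dist v v₂ = 1 := SimpleGraph.dist_eq_one_iff_adj.mpr hAdjvv₂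
      omega
    have hrp : puv₂.reverse.IsPath := hp.reverse
    have hrlen : puv₂.reverse.length = (NCG.graph st).dist v₂ u := by
      rw [SimpleGraph.Walk.length_reverse, hl, SimpleGraph.dist_comm]
    have hre : s(v₂, v) ∉ puv₂.reverse.edges := by
      rw [SimpleGraph.Walk.edges_reverse, List.mem_reverse, Sym2.eq_swap]
      exact he
    obtain ⟨y₂, hy₂adj, hy₂dist, hy₂v⟩ :=
      NCGaux.exists_parent_avoid hconn hv₂u puv₂.reverse hrp hrlen hre
    have hAdjvv₁ : (NCG.graph st).Adj v v₁ := pvu.adj_of_mem_edges hevu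
    classical
    have hune : ∀ x : V, x ≠ u →
        ∃ y, (NCG.graph st).Adj x y ∧
          (NCG.graph st).dist u y + 1 = (NCG.graph st).dist u x :=
      fun x hx => NCGaux.exists_parent hconn hx
    obtain ⟨par, hpadj, hpdist, hpv, hpv₂⟩ :
        ∃ par : V → V, (∀ x, x ≠ u → (NCG.graph st).Adj x (par x)) ∧
          (∀ x, x ≠ u →
            (NCG.graph st).dist u (par x) + 1 = (NCG.graph st).dist u x) ∧
          par v = v₁ ∧ par v₂ = y₂ := by
      refine ⟨fun x => if x = v then v₁ else if x = v₂ then y₂ else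
          if hx : x = u then x else Classical.choose (hune x hx), ?_, ?_, ?_, ?_⟩
      · intro x hx
        by_cases h1 : x = v
        · subst h1; simpa using hAdjvv₁
        · by_cases h2 : x = v₂
          · subst h2; simpa [h1] using hy₂adj
          · simpa [h1, h2, hx] using (Classical.choose_spec (hune x hx)).1
      · intro x hx
        by_cases h1 : x = v
        · subst h1; simpa using factA
        · by_cases h2 : x = v₂
          · subst h2; simpa [h1] using hy₂dist
          · simpa [h1, h2, hx] using (Classical.choose_spec (hune x hx)).2
      · simp
      · simp [hv₂v]
    refine ⟨_, NCGaux.spt_parent hconn u par hpadj hpdist, ?_⟩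
    rw [SimpleGraph.fromRel_adj]
    rintro ⟨hne, ⟨-, h⟩ | ⟨-, h⟩⟩
    · rw [hpv] at h; exact hv₁v₂ h
    · rw [hpv₂] at h; exact hy₂v h
end

section
/- Let H be a biconnected graph. Then for every edge e of H there exists a min cycle of H that contains the edge e, i.e., a cycle C containing e such that for every two vertices x, x' of C the distance between x and x' along C equals their distance in H. -/
open scoped BigOperators

section MinCycleHelpers

open SimpleGraph SimpleGraph.Walk

variable {U : Type*} {G : SimpleGraph U}

private lemma loop_path_length_zero {v : U} {p : G.Walk v v} (hp : p.IsPath) :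
    p.length = 0 := by
  cases p with
  | nil => rfl
  | cons h q =>
    exact absurd q.end_mem_support ((SimpleGraph.Walk.cons_isPath_iff h q).mp hp).2

private lemma path_length_one_of_edge {u v : U} {p : G.Walk u v} (hp : p.IsPath)
    (he : s(u, v) ∈ p.edges) : p.length = 1 := by
  cases p with
  | nil => simp at he
  | @cons _ w _ h q =>
    rw [SimpleGraph.Walk.edges_cons, List.mem_cons] at he
    rcases he with he | he
    · have hv : v = w := Sym2.congr_right.mp he
      subst hv
      have := loop_path_length_zero ((SimpleGraph.Walk.cons_isPath_iff h q).mp hp).1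
      simp [this]
    · exact absurd (q.fst_mem_support_of_mem_edges he)
        ((SimpleGraph.Walk.cons_isPath_iff h q).mp hp).2

private lemma edges_eq_of_length_one {u v : U} {p : G.Walk u v} (hp : p.length = 1) :
    p.edges = [s(u, v)] := by
  cases p with
  | nil => simp at hp
  | @cons _ w _ h q =>
    have hq : q.length = 0 := by simpa using hp
    have hw : w = v := SimpleGraph.Walk.eq_of_length_eq_zero hq
    subst hw
    have hqe : q.edges = [] := List.length_eq_zero_iff.mp
      (by rw [SimpleGraph.Walk.length_edges, hq])
    simp [hqe]

private lemma exists_coe_walk {G' : G.Subgraph} :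
    ∀ {x y : U} (p : G.Walk x y), (∀ e ∈ p.edges, e ∈ G'.edgeSet) →
      ∀ (hx : x ∈ G'.verts) (hy : y ∈ G'.verts),
      ∃ q : G'.coe.Walk ⟨x, hx⟩ ⟨y, hy⟩, q.length = p.length := by
  intro x y p
  induction p with
  | nil => exact fun _ hx hy => ⟨SimpleGraph.Walk.nil, rfl⟩
  | @cons x z y h q ih =>
    intro he hx hy
    have hadj : G'.Adj x z := SimpleGraph.Subgraph.mem_edgeSet.mp (he _ (by simp))
    have hz : z ∈ G'.verts := hadj.snd_mem
    obtain ⟨q', hq'⟩ := ih (fun e heq => he e (by simp [heq])) hz hy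
    exact ⟨SimpleGraph.Walk.cons (by exact hadj) q', by show q'.length + 1 = q.length + 1; rw [hq']⟩

private lemma toSubgraph_adj_of_mem_edges {x y u v : U} (p : G.Walk x y)
    (h : s(u, v) ∈ p.edges) : p.toSubgraph.Adj u v :=
  SimpleGraph.Subgraph.mem_edgeSet.mp ((p.mem_edges_toSubgraph).mpr h)

private lemma append_isCycle {u v : U} (hne : u ≠ v) {P : G.Walk u v} {R : G.Walk v u}
    (hP : P.IsPath) (hR : R.IsPath)
    (hdisj : ∀ z ∈ P.support, z ∈ R.support → z = u ∨ z = v)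
    (hlen : P.length ≠ 1 ∨ R.length ≠ 1) : (P.append R).IsCycle := by
  have hPn : P.support.Nodup := (SimpleGraph.Walk.isPath_def P).mp hP
  have hRn : R.support.Nodup := (SimpleGraph.Walk.isPath_def R).mp hR
  have hPc : P.support = u :: P.support.tail := P.support_eq_cons
  have hRc : R.support = v :: R.support.tail := R.support_eq_cons
  have huP : u ∉ P.support.tail := by
    rw [hPc] at hPn; exact (List.nodup_cons.mp hPn).1
  have hvR : v ∉ R.support.tail := by
    rw [hRc] at hRn; exact (List.nodup_cons.mp hRn).1
  have hedgedisj : ∀ ed ∈ P.edges, ed ∉ R.edges := by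
    intro ed hedP hedR
    induction ed using Sym2.ind with
    | _ z1 z2 =>
      have hz1P := P.fst_mem_support_of_mem_edges hedP
      have hz2P := P.snd_mem_support_of_mem_edges hedP
      have hz1R := R.fst_mem_support_of_mem_edges hedR
      have hz2R := R.snd_mem_support_of_mem_edges hedR
      have hz12 : z1 ≠ z2 := (P.adj_of_mem_edges hedP).ne
      have h1 := hdisj z1 hz1P hz1R
      have h2 := hdisj z2 hz2P hz2R
      have hed : s(z1, z2) = s(u, v) := by
        rcases h1 with rfl | rfl <;> rcases h2 with rfl | rfl
        · exact absurd rfl hz12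
        · rfl
        · exact Sym2.eq_swap
        · exact absurd rfl hz12
      rw [hed] at hedP hedR
      have h1' := path_length_one_of_edge hP hedP
      have h2' := path_length_one_of_edge hR (by rw [Sym2.eq_swap]; exact hedR)
      rcases hlen with h | h
      · exact h h1'
      · exact h h2'
  rw [SimpleGraph.Walk.isCycle_def]
  refine ⟨?_, ?_, ?_⟩
  · rw [SimpleGraph.Walk.isTrail_def, SimpleGraph.Walk.edges_append, List.nodup_append]
    exact ⟨hP.isTrail.edges_nodup, hR.isTrail.edges_nodup, fun a ha b hb hab => hedgedisj a ha (hab ▸ hb)⟩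
  · intro hnil
    have hl := congrArg SimpleGraph.Walk.length hnil
    rw [SimpleGraph.Walk.length_append] at hl
    simp only [SimpleGraph.Walk.length_nil] at hl
    exact hne (SimpleGraph.Walk.eq_of_length_eq_zero (p := P) (by omega))
  · have hsupp : (P.append R).support = u :: (P.support.tail ++ R.support.tail) := by
      rw [SimpleGraph.Walk.support_append, hPc]; rfl
    rw [hsupp, List.tail_cons, List.nodup_append]
    refine ⟨?_, ?_, ?_⟩
    · exact (List.nodup_cons.mp (hPc ▸ hPn)).2
    · exact (List.nodup_cons.mp (hRc ▸ hRn)).2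
    · intro z hz1 z' hz2 hzz
      subst hzz
      have hzP : z ∈ P.support := by rw [hPc]; exact List.mem_cons_of_mem _ hz1
      have hzR : z ∈ R.support := by rw [hRc]; exact List.mem_cons_of_mem _ hz2
      rcases hdisj z hzP hzR with rfl | rfl
      · exact huP hz1
      · exact hvR hz2

private lemma takeUntil_isPath_of_cycle [DecidableEq U] {x y : U} {C : G.Walk x x}
    (hC : C.IsCycle) (hy : y ∈ C.support) (hyx : y ≠ x) :
    (C.takeUntil y hy).IsPath ∧ (C.dropUntil y hy).IsPath := by
  have ht : C.support.tail.Nodup := ((SimpleGraph.Walk.isCycle_def C).mp hC).2.2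
  have hspec : (C.takeUntil y hy).append (C.dropUntil y hy) = C := C.take_spec hy
  set A1 := C.takeUntil y hy with hA1
  set A2 := C.dropUntil y hy with hA2
  have h1c : A1.support = x :: A1.support.tail := A1.support_eq_cons
  have h2c : A2.support = y :: A2.support.tail := A2.support_eq_cons
  have hsupp : C.support = x :: (A1.support.tail ++ A2.support.tail) := by
    rw [← hspec, SimpleGraph.Walk.support_append, h1c]; rfl
  have h2 : x :: C.support.tail = x :: (A1.support.tail ++ A2.support.tail) := by
    rw [← C.support_eq_cons, hsupp]
  have htail : C.support.tail = A1.support.tail ++ A2.support.tail := by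
    injection h2
  rw [htail, List.nodup_append] at ht
  obtain ⟨ht1, ht2, hdisj⟩ := ht
  have hyA1 : y ∈ A1.support.tail := by
    have h := A1.end_mem_support
    rw [h1c, List.mem_cons] at h
    rcases h with h | h
    · exact absurd h hyx
    · exact h
  have hxA2 : x ∈ A2.support.tail := by
    have h := A2.end_mem_support
    rw [h2c, List.mem_cons] at h
    rcases h with h | h
    · exact absurd h.symm hyx
    · exact h
  constructor
  · rw [SimpleGraph.Walk.isPath_def, h1c, List.nodup_cons]
    exact ⟨fun hx1 => hdisj x hx1 x hxA2 rfl, ht1⟩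
  · rw [SimpleGraph.Walk.isPath_def, h2c, List.nodup_cons]
    exact ⟨fun hy2 => hdisj y hyA1 y hy2 rfl, ht2⟩

private lemma induce_walk_exists {S : Set U} :
    ∀ {a b : S} (q : (G.induce S).Walk a b),
      ∃ p : G.Walk a.1 b.1, ∀ z ∈ p.support, z ∈ S := by
  intro a b q
  induction q with
  | nil =>
    refine ⟨SimpleGraph.Walk.nil, ?_⟩
    intro z hz
    simp only [SimpleGraph.Walk.support_nil, List.mem_singleton] at hz
    subst hz
    exact Subtype.coe_prop _
  | @cons a c b h q ih =>
    obtain ⟨p, hp⟩ := ih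
    refine ⟨SimpleGraph.Walk.cons (by exact h) p, ?_⟩
    intro z hz
    replace hz : z = a.1 ∨ z ∈ p.support := List.mem_cons.mp hz
    rcases hz with rfl | hz
    · exact a.2
    · exact hp z hz

end MinCycleHelpers

/-- In a biconnected graph `H` every edge lies on a min cycle. -/
theorem exists_min_cycle_through_edge {W : Type*} [Fintype W] [DecidableEq W]
    (H : SimpleGraph W)
    (hcard : 3 ≤ Fintype.card W)
    (hconn : H.Connected)
    (hnocut : ∀ x : W, (H.induce ({x}ᶜ : Set W)).Connected) :
    ∀ e ∈ H.edgeSet, ∃ (a : W) (c : H.Walk a a), NCG.IsMinCycle H c ∧ e ∈ c.edges := by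
  intro e he
  induction e using Sym2.ind with
  | _ a b =>
  rw [SimpleGraph.mem_edgeSet] at he
  have hab : a ≠ b := he.ne
  -- Step 1: construct some cycle through the edge s(a,b)
  have hcyc0 : ∃ (a1 : W) (c : H.Walk a1 a1), c.IsCycle ∧ s(a, b) ∈ c.edges := by
    have hz3 : ∃ z : W, z ≠ a ∧ z ≠ b := by
      by_contra hcon
      push_neg at hcon
      have hsub : (Finset.univ : Finset W) ⊆ {a, b} := by
        intro z _
        by_cases hza : z = a
        · simp [hza]
        · simp [hcon z hza]
      have h1 := Finset.card_le_card hsub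
      have h2 : ({a, b} : Finset W).card ≤ 2 :=
        (Finset.card_insert_le _ _).trans (by simp)
      rw [Finset.card_univ] at h1
      omega
    obtain ⟨z, hza, hzb⟩ := hz3
    have hanb : a ∈ ({b}ᶜ : Set W) := Set.mem_compl_singleton_iff.mpr hab
    have hznb : z ∈ ({b}ᶜ : Set W) := Set.mem_compl_singleton_iff.mpr hzb
    obtain ⟨p⟩ := (hnocut b) ⟨a, hanb⟩ ⟨z, hznb⟩
    have hpnil : ¬ p.Nil := SimpleGraph.Walk.not_nil_of_ne
      (fun h => hza (congrArg Subtype.val h).symm)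
    have hac : H.Adj a (p.getVert 1).1 := p.adj_snd hpnil
    have hcb : (p.getVert 1).1 ≠ b := Set.mem_compl_singleton_iff.mp (p.getVert 1).2
    have hcna : (p.getVert 1).1 ∈ ({a}ᶜ : Set W) := Set.mem_compl_singleton_iff.mpr hac.ne'
    have hbna : b ∈ ({a}ᶜ : Set W) := Set.mem_compl_singleton_iff.mpr (Ne.symm hab)
    obtain ⟨q0⟩ := (hnocut a) ⟨(p.getVert 1).1, hcna⟩ ⟨b, hbna⟩
    obtain ⟨q1, hq1⟩ := induce_walk_exists q0
    let w0 : H.Walk b a :=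
      q1.reverse.append (SimpleGraph.Walk.cons hac.symm SimpleGraph.Walk.nil)
    have hw0e : s(a, b) ∉ w0.edges := by
      intro hmem
      rw [SimpleGraph.Walk.edges_append, List.mem_append] at hmem
      rcases hmem with hmem | hmem
      · rw [SimpleGraph.Walk.edges_reverse, List.mem_reverse] at hmem
        exact (Set.mem_compl_singleton_iff.mp
          (hq1 a (q1.fst_mem_support_of_mem_edges hmem))) rfl
      · simp only [SimpleGraph.Walk.edges_cons, SimpleGraph.Walk.edges_nil,
          List.mem_singleton] at hmem
        rw [Sym2.eq_iff] at hmem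
        rcases hmem with ⟨h1, h2⟩ | ⟨h1, h2⟩
        · exact hac.ne h1
        · exact hcb h2.symm
    refine ⟨a, SimpleGraph.Walk.cons he w0.bypass, ?_, ?_⟩
    · exact (SimpleGraph.Walk.cons_isCycle_iff w0.bypass he).mpr
        ⟨w0.bypass_isPath, fun h => hw0e (w0.edges_bypass_subset h)⟩
    · simp
  obtain ⟨a0, c0, hc0, he0⟩ := hcyc0
  set S0 : Set ℕ :=
    {n | ∃ (a1 : W) (c : H.Walk a1 a1), c.IsCycle ∧ s(a, b) ∈ c.edges ∧ c.length = n} with hS0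
  have hS0ne : S0.Nonempty := ⟨c0.length, a0, c0, hc0, he0, rfl⟩
  obtain ⟨a1, C, hC, heC, hlenC⟩ := Nat.sInf_mem hS0ne
  have hmin : ∀ m ∈ S0, sInf S0 ≤ m := fun m hm => Nat.sInf_le hm
  refine ⟨a1, C, ⟨hC, ?_⟩, heC⟩
  have hcoeconn : C.toSubgraph.coe.Connected := C.toSubgraph_connected.coe
  have hlow : ∀ (x : W) (hx : x ∈ C.toSubgraph.verts) (y : W) (hy : y ∈ C.toSubgraph.verts),
      H.dist x y ≤ C.toSubgraph.coe.dist ⟨x, hx⟩ ⟨y, hy⟩ := by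
    intro x hx y hy
    obtain ⟨q, hq⟩ := hcoeconn.exists_walk_length_eq_dist ⟨x, hx⟩ ⟨y, hy⟩
    have h2 := SimpleGraph.dist_le (q.map C.toSubgraph.hom)
    rw [SimpleGraph.Walk.length_map, hq] at h2
    exact h2
  suffices hup : ∀ (x : W) (hx : x ∈ C.toSubgraph.verts) (y : W)
      (hy : y ∈ C.toSubgraph.verts),
      C.toSubgraph.coe.dist ⟨x, hx⟩ ⟨y, hy⟩ ≤ H.dist x y by
    intro x hx y hy
    exact le_antisymm (hup x hx y hy) (hlow x hx y hy)
  by_contra hbad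
  push_neg at hbad
  obtain ⟨x0, hx0, y0, hy0, hlt0⟩ := hbad
  set S1 : Set ℕ :=
    {d | ∃ (x : W) (hx : x ∈ C.toSubgraph.verts) (y : W) (hy : y ∈ C.toSubgraph.verts),
      H.dist x y < C.toSubgraph.coe.dist ⟨x, hx⟩ ⟨y, hy⟩ ∧ H.dist x y = d} with hS1
  have hS1ne : S1.Nonempty := ⟨H.dist x0 y0, x0, hx0, y0, hy0, hlt0, rfl⟩
  obtain ⟨x, hx, y, hy, hlt, hd0⟩ := Nat.sInf_mem hS1ne
  have hmin1 : ∀ (x' : W) (hx' : x' ∈ C.toSubgraph.verts) (y' : W)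
      (hy' : y' ∈ C.toSubgraph.verts),
      H.dist x' y' < C.toSubgraph.coe.dist ⟨x', hx'⟩ ⟨y', hy'⟩ → sInf S1 ≤ H.dist x' y' :=
    fun x' hx' y' hy' hv => Nat.sInf_le ⟨x', hx', y', hy', hv, rfl⟩
  have hxy : x ≠ y := by
    rintro rfl
    rw [SimpleGraph.dist_self] at hlt
    have hzero : C.toSubgraph.coe.dist ⟨x, hx⟩ ⟨x, hy⟩ = 0 := SimpleGraph.dist_self
    omega
  have hHd1 : 1 ≤ H.dist x y := hconn.pos_dist_of_ne hxy
  have hxyedge : s(x, y) ∉ C.edges := by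
    intro hmem
    have hadjc : C.toSubgraph.coe.Adj ⟨x, hx⟩ ⟨y, hy⟩ := by
      exact toSubgraph_adj_of_mem_edges C hmem
    have hle1 := SimpleGraph.dist_le (SimpleGraph.Walk.cons hadjc SimpleGraph.Walk.nil)
    simp only [SimpleGraph.Walk.length_cons, SimpleGraph.Walk.length_nil] at hle1
    omega
  obtain ⟨w1, hw1⟩ := hconn.exists_walk_length_eq_dist x y
  have hQpath : w1.bypass.IsPath := w1.bypass_isPath
  set Q := w1.bypass with hQdef
  have hQlen : Q.length = H.dist x y :=
    le_antisymm (hw1 ▸ w1.length_bypass_le) (SimpleGraph.dist_le Q)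
  have hint : ∀ z ∈ Q.support, z ∈ C.support → z = x ∨ z = y := by
    intro z hzQ hzC
    by_contra hcon
    push_neg at hcon
    obtain ⟨hzx, hzy⟩ := hcon
    have hzv : z ∈ C.toSubgraph.verts := (C.mem_verts_toSubgraph).mpr hzC
    have hsum : (Q.takeUntil z hzQ).length + (Q.dropUntil z hzQ).length = H.dist x y := by
      rw [← SimpleGraph.Walk.length_append, Q.take_spec hzQ, hQlen]
    have h1 : (Q.takeUntil z hzQ).length ≠ 0 :=
      fun h0 => hzx (SimpleGraph.Walk.eq_of_length_eq_zero (p := Q.takeUntil z hzQ) h0).symm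
    have h2 : (Q.dropUntil z hzQ).length ≠ 0 :=
      fun h0 => hzy (SimpleGraph.Walk.eq_of_length_eq_zero (p := Q.dropUntil z hzQ) h0)
    have hd1 : H.dist x z ≤ (Q.takeUntil z hzQ).length := SimpleGraph.dist_le _
    have hd2 : H.dist z y ≤ (Q.dropUntil z hzQ).length := SimpleGraph.dist_le _
    have e1 : C.toSubgraph.coe.dist ⟨x, hx⟩ ⟨z, hzv⟩ ≤ H.dist x z := by
      by_contra hv
      push_neg at hv
      have := hmin1 x hx z hzv hv
      omega
    have e2 : C.toSubgraph.coe.dist ⟨z, hzv⟩ ⟨y, hy⟩ ≤ H.dist z y := by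
      by_contra hv
      push_neg at hv
      have := hmin1 z hzv y hy hv
      omega
    have htri := hcoeconn.dist_triangle (u := ⟨x, hx⟩) (v := ⟨z, hzv⟩) (w := ⟨y, hy⟩)
    omega
  have hxC : x ∈ C.support := (C.mem_verts_toSubgraph).mp hx
  set C2 := C.rotate x hxC with hC2def
  have hC' : C2.IsCycle := hC.rotate hxC
  have hCsub : C2.toSubgraph = C.toSubgraph := C.toSubgraph_rotate hxC
  have hyC' : y ∈ C2.support := by
    rw [← SimpleGraph.Walk.mem_verts_toSubgraph, hCsub]
    exact hy
  have hedgesC' : ∀ ed : Sym2 W, ed ∈ C2.edges ↔ ed ∈ C.edges :=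
    fun ed => (C.rotate_edges x hxC).perm.mem_iff
  have hlenC' : C2.length = sInf S0 := by
    rw [hC2def]
    show ((C.dropUntil x hxC).append (C.takeUntil x hxC)).length = sInf S0
    rw [SimpleGraph.Walk.length_append, Nat.add_comm,
      ← SimpleGraph.Walk.length_append, C.take_spec hxC, hlenC]
  obtain ⟨hA1path, hA2path⟩ := takeUntil_isPath_of_cycle hC' hyC' (Ne.symm hxy)
  set A1 := C2.takeUntil y hyC' with hA1def
  set A2 := C2.dropUntil y hyC' with hA2def
  have hspec : A1.append A2 = C2 := C2.take_spec hyC'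
  have hlen12 : A1.length + A2.length = sInf S0 := by
    rw [← SimpleGraph.Walk.length_append, hspec, hlenC']
  have hedge12 : s(a, b) ∈ A1.edges ∨ s(a, b) ∈ A2.edges := by
    have h := (hedgesC' s(a, b)).mpr heC
    rw [← hspec, SimpleGraph.Walk.edges_append, List.mem_append] at h
    exact h
  have hA1C : ∀ ed ∈ A1.edges, ed ∈ C.toSubgraph.edgeSet := fun ed hed =>
    (C.mem_edges_toSubgraph).mpr ((hedgesC' ed).mp (C2.edges_takeUntil_subset hyC' hed))
  have hA2C : ∀ ed ∈ A2.edges, ed ∈ C.toSubgraph.edgeSet := fun ed hed =>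
    (C.mem_edges_toSubgraph).mpr ((hedgesC' ed).mp (C2.edges_dropUntil_subset hyC' hed))
  have hsupA1 : ∀ z ∈ A1.support, z ∈ C.support := by
    intro z hz
    rw [← SimpleGraph.Walk.mem_verts_toSubgraph, ← hCsub, SimpleGraph.Walk.mem_verts_toSubgraph]
    exact C2.support_takeUntil_subset hyC' hz
  have hsupA2 : ∀ z ∈ A2.support, z ∈ C.support := by
    intro z hz
    rw [← SimpleGraph.Walk.mem_verts_toSubgraph, ← hCsub, SimpleGraph.Walk.mem_verts_toSubgraph]
    exact C2.support_dropUntil_subset hyC' hz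
  have hdA1 : C.toSubgraph.coe.dist ⟨x, hx⟩ ⟨y, hy⟩ ≤ A1.length := by
    obtain ⟨q, hq⟩ := exists_coe_walk A1 hA1C hx hy
    have := SimpleGraph.dist_le q
    omega
  have hdA2 : C.toSubgraph.coe.dist ⟨x, hx⟩ ⟨y, hy⟩ ≤ A2.length := by
    obtain ⟨q, hq⟩ := exists_coe_walk A2 hA2C hy hx
    have h1 := SimpleGraph.dist_le q
    have h2 : C.toSubgraph.coe.dist (⟨x, hx⟩ : C.toSubgraph.verts) ⟨y, hy⟩ =
        C.toSubgraph.coe.dist ⟨y, hy⟩ ⟨x, hx⟩ := SimpleGraph.dist_comm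
    omega
  rcases hedge12 with hcase | hcase
  · have hlenA1 : A1.length ≠ 1 := by
      intro h1
      have hE := edges_eq_of_length_one h1
      rw [hE, List.mem_singleton] at hcase
      exact hxyedge (hcase ▸ heC)
    have hdisjP : ∀ z ∈ A1.support, z ∈ Q.reverse.support → z = x ∨ z = y := by
      intro z h1 h2
      rw [SimpleGraph.Walk.support_reverse, List.mem_reverse] at h2
      exact hint z h2 (hsupA1 z h1)
    have hnew : (A1.append Q.reverse).IsCycle :=
      append_isCycle hxy hA1path hQpath.reverse hdisjP (Or.inl hlenA1)
    have hnewe : s(a, b) ∈ (A1.append Q.reverse).edges := by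
      rw [SimpleGraph.Walk.edges_append, List.mem_append]; exact Or.inl hcase
    have hnewlen : (A1.append Q.reverse).length = A1.length + Q.length := by
      rw [SimpleGraph.Walk.length_append, SimpleGraph.Walk.length_reverse]
    have hge : sInf S0 ≤ A1.length + Q.length :=
      hmin _ ⟨x, A1.append Q.reverse, hnew, hnewe, hnewlen⟩
    omega
  · have hlenA2 : A2.length ≠ 1 := by
      intro h1
      have hE := edges_eq_of_length_one h1
      rw [hE, List.mem_singleton] at hcase
      refine hxyedge ?_
      rw [Sym2.eq_swap]
      exact hcase ▸ heC
    have hdisjP : ∀ z ∈ A2.support, z ∈ Q.support → z = y ∨ z = x := by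
      intro z h1 h2
      exact (hint z h2 (hsupA2 z h1)).symm
    have hnew : (A2.append Q).IsCycle :=
      append_isCycle (Ne.symm hxy) hA2path hQpath hdisjP (Or.inl hlenA2)
    have hnewe : s(a, b) ∈ (A2.append Q).edges := by
      rw [SimpleGraph.Walk.edges_append, List.mem_append]; exact Or.inl hcase
    have hge : sInf S0 ≤ A2.length + Q.length :=
      hmin _ ⟨y, A2.append Q, hnew, hnewe, SimpleGraph.Walk.length_append _ _⟩
    omega
end
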